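/- Let 𝕋 be a generator set of R and let A₁, A₂ ⊆ Fin n be arbitrary subsets. Then the unordered pairs of operator sets coincide, {O_{A₁}, O_{A₁ᶜ}} = {O_{A₂}, O_{A₂ᶜ}}, if and only if A₁ ∼_R A₂. -/

import Mathlib

open Finset

/-- Restriction of a computational basis state `ψ : Fin n → Bool` to a subsystem `A`. -/
def restrict {n : ℕ} (ψ : Fin n → Bool) (A : Finset (Fin n)) : {x // x ∈ A} → Bool :=
  fun a => ψ a.1

/-- The quotient set `R/∼_A`: the set of equivalence classes of the relation
`ψ ∼_A φ ↔ ψ|_A = φ|_A` on `R`. -/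
def classes {n : ℕ} (R : Finset (Fin n → Bool)) (A : Finset (Fin n)) :
    Set (Set (Fin n → Bool)) :=
  {C | ∃ ψ ∈ R, C = {φ | φ ∈ R ∧ restrict φ A = restrict ψ A}}

/-- `A₁ ∼_R A₂`: the unordered pairs of quotient sets coincide. -/
def simR {n : ℕ} (R : Finset (Fin n → Bool)) (A₁ A₂ : Finset (Fin n)) : Prop :=
  ({classes R A₁, classes R A₁ᶜ} : Set (Set (Set (Fin n → Bool)))) =
    {classes R A₂, classes R A₂ᶜ}

/-- `G(𝕋)`: the set of all finite compositions of elements of `T`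
(the empty composition being the identity). -/
def Gset {α : Type*} (T : Set (α → α)) : Set (α → α) :=
  {P | ∃ l : List (α → α), (∀ f ∈ l, f ∈ T) ∧ P = l.foldr (· ∘ ·) id}

/-- `𝕋` is a generator set of `R`: it contains the identity, finite compositions of its
elements commute, it acts transitively on `R`, and it is locally invariant. -/
def IsGenSet {n : ℕ} (R : Finset (Fin n → Bool))
    (T : Set ({ψ // ψ ∈ R} → {ψ // ψ ∈ R})) : Prop :=
  id ∈ T ∧
  (∀ P ∈ Gset T, ∀ Q ∈ Gset T, P ∘ Q = Q ∘ P) ∧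
  (∀ ψ φ : {ψ // ψ ∈ R}, ∃ P ∈ Gset T, P ψ = φ) ∧
  (∀ P ∈ T, ∀ A : Finset (Fin n), A.Nonempty →
    (∃ ψ : {ψ // ψ ∈ R}, restrict (↑(P ψ)) A = restrict (↑ψ) A) →
    ∀ φ : {ψ // ψ ∈ R}, restrict (↑(P φ)) A = restrict (↑φ) A)

/-- The operator set `O_A` of a subsystem `A` (for `A = ∅` this is all of `G(𝕋)`). -/
def opSet {n : ℕ} (R : Finset (Fin n → Bool))
    (T : Set ({ψ // ψ ∈ R} → {ψ // ψ ∈ R})) (A : Finset (Fin n)) :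
    Set ({ψ // ψ ∈ R} → {ψ // ψ ∈ R}) :=
  {P | P ∈ Gset T ∧ ∀ ψ : {ψ // ψ ∈ R}, restrict (↑(P ψ)) A = restrict (↑ψ) A}


section Aux

variable {n : ℕ} (R : Finset (Fin n → Bool)) (T : Set ({ψ // ψ ∈ R} → {ψ // ψ ∈ R}))

lemma restrict_eq_iff (φ ψ : Fin n → Bool) (A : Finset (Fin n)) :
    restrict φ A = restrict ψ A ↔ ∀ i ∈ A, φ i = ψ i := by
  constructor
  · intro h i hi; exact congrFun h ⟨i, hi⟩
  · intro h; funext a; exact h a.1 a.2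

lemma gen_coord (hT : IsGenSet R T) {f : {ψ // ψ ∈ R} → {ψ // ψ ∈ R}} (hf : f ∈ T)
    (i : Fin n) (x y : {ψ // ψ ∈ R}) (hxy : (x : Fin n → Bool) i = (y : Fin n → Bool) i) :
    ((f x : {ψ // ψ ∈ R}) : Fin n → Bool) i = ((f y : {ψ // ψ ∈ R}) : Fin n → Bool) i := by
  have hli := hT.2.2.2 f hf {i} (singleton_nonempty i)
  by_cases h : ∃ ψ : {ψ // ψ ∈ R}, restrict (↑(f ψ)) ({i} : Finset (Fin n)) = restrict (↑ψ) {i}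
  · have hx := (restrict_eq_iff _ _ _).mp (hli h x) i (mem_singleton_self i)
    have hy := (restrict_eq_iff _ _ _).mp (hli h y) i (mem_singleton_self i)
    rw [hx, hy, hxy]
  · push_neg at h
    have key : ∀ z : {ψ // ψ ∈ R},
        ((f z : {ψ // ψ ∈ R}) : Fin n → Bool) i = !((z : Fin n → Bool) i) := by
      intro z
      refine Bool.eq_not_of_ne fun he => h z ?_
      rw [restrict_eq_iff]
      intro j hj
      rw [mem_singleton] at hj
      subst hj; exact he
    rw [key x, key y, hxy]

lemma Gset_coord (hT : IsGenSet R T) {P : {ψ // ψ ∈ R} → {ψ // ψ ∈ R}} (hP : P ∈ Gset T)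
    (i : Fin n) (x y : {ψ // ψ ∈ R}) (hxy : (x : Fin n → Bool) i = (y : Fin n → Bool) i) :
    ((P x : {ψ // ψ ∈ R}) : Fin n → Bool) i = ((P y : {ψ // ψ ∈ R}) : Fin n → Bool) i := by
  obtain ⟨l, hl, rfl⟩ := hP
  induction l with
  | nil => exact hxy
  | cons f l ih =>
    have hf : f ∈ T := hl f List.mem_cons_self
    have hl' : ∀ g ∈ l, g ∈ T := fun g hg => hl g (List.mem_cons_of_mem _ hg)
    exact gen_coord R T hT hf i _ _ (ih hl')

lemma Gset_locinv (hT : IsGenSet R T) {P : {ψ // ψ ∈ R} → {ψ // ψ ∈ R}} (hP : P ∈ Gset T)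
    (A : Finset (Fin n)) (ψ : {ψ // ψ ∈ R})
    (hψ : restrict (↑(P ψ)) A = restrict (↑ψ) A) (φ : {ψ // ψ ∈ R}) :
    restrict (↑(P φ)) A = restrict (↑φ) A := by
  obtain ⟨Q, hQ, hQψ⟩ := hT.2.2.1 ψ φ
  have hcomm : P (Q ψ) = Q (P ψ) := congrFun (hT.2.1 P hP Q hQ) ψ
  rw [restrict_eq_iff] at hψ ⊢
  intro i hi
  have : P φ = Q (P ψ) := by rw [← hQψ, hcomm]
  rw [this, ← hQψ]
  exact Gset_coord R T hT hQ i _ _ (hψ i hi)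

/-- The relation-level equivalence of two subsystems. -/
def relEq (A B : Finset (Fin n)) : Prop :=
  ∀ x y : {ψ // ψ ∈ R},
    (restrict (↑x) A = restrict (↑y) A ↔ restrict (↑x) B = restrict (↑y) B)

lemma opSubset_rel (hT : IsGenSet R T) {A B : Finset (Fin n)}
    (h : opSet R T A ⊆ opSet R T B) (x y : {ψ // ψ ∈ R})
    (hxy : restrict (↑x) A = restrict (↑y) A) :
    restrict (↑x) B = restrict (↑y) B := by
  obtain ⟨P, hP, hPx⟩ := hT.2.2.1 x y
  have hPA : restrict (↑(P x)) A = restrict (↑x) A := by rw [hPx]; exact hxy.symm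
  have hPB : P ∈ opSet R T B := h ⟨hP, fun ψ => Gset_locinv R T hT hP A x hPA ψ⟩
  have := hPB.2 x
  rw [hPx] at this
  exact this.symm

lemma classesSubset_rel {A B : Finset (Fin n)}
    (h : classes R A ⊆ classes R B) (x y : {ψ // ψ ∈ R})
    (hxy : restrict (↑x) A = restrict (↑y) A) :
    restrict (↑x) B = restrict (↑y) B := by
  have hC : {φ | φ ∈ R ∧ restrict φ A = restrict (↑x) A} ∈ classes R A := ⟨↑x, x.2, rfl⟩
  obtain ⟨ψ, _, hCeq⟩ := h hC
  have hx : (↑x : Fin n → Bool) ∈ {φ | φ ∈ R ∧ restrict φ B = restrict ψ B} := by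
    rw [← hCeq]; exact ⟨x.2, rfl⟩
  have hy : (↑y : Fin n → Bool) ∈ {φ | φ ∈ R ∧ restrict φ B = restrict ψ B} := by
    rw [← hCeq]; exact ⟨y.2, hxy.symm⟩
  rw [hx.2, hy.2]

lemma rel_opSet_eq (hrel : relEq R A B) : opSet R T A = opSet R T B := by
  ext P
  exact and_congr_right fun _ => forall_congr' fun ψ => hrel (P ψ) ψ

lemma rel_classes_subset (hrel : relEq R A B) : classes R A ⊆ classes R B := by
  rintro C ⟨ψ, hψ, rfl⟩
  refine ⟨ψ, hψ, ?_⟩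
  ext φ
  constructor
  · rintro ⟨hφ, hres⟩
    exact ⟨hφ, (hrel ⟨φ, hφ⟩ ⟨ψ, hψ⟩).mp hres⟩
  · rintro ⟨hφ, hres⟩
    exact ⟨hφ, (hrel ⟨φ, hφ⟩ ⟨ψ, hψ⟩).mpr hres⟩

lemma opSet_eq_iff_classes_eq (hT : IsGenSet R T) (A B : Finset (Fin n)) :
    opSet R T A = opSet R T B ↔ classes R A = classes R B := by
  constructor
  · intro h
    have hrel : relEq R A B := fun x y =>
      ⟨opSubset_rel R T hT h.subset x y, opSubset_rel R T hT h.symm.subset x y⟩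
    exact le_antisymm (rel_classes_subset R hrel)
      (rel_classes_subset R fun x y => (hrel x y).symm)
  · intro h
    have hrel : relEq R A B := fun x y =>
      ⟨classesSubset_rel R h.subset x y, classesSubset_rel R h.symm.subset x y⟩
    exact rel_opSet_eq R T hrel

end Aux

/-- the unordered pairs of operator sets coincide iff `A₁ ∼_R A₂`. -/
theorem opSet_pair_eq_iff_simR {n : ℕ} (R : Finset (Fin n → Bool)) (hR : R.Nonempty)
    (T : Set ({ψ // ψ ∈ R} → {ψ // ψ ∈ R})) (hT : IsGenSet R T)
    (A₁ A₂ : Finset (Fin n)) :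
    ({opSet R T A₁, opSet R T A₁ᶜ} : Set (Set ({ψ // ψ ∈ R} → {ψ // ψ ∈ R}))) =
        {opSet R T A₂, opSet R T A₂ᶜ} ↔
      simR R A₁ A₂ := by
  rw [Set.pair_eq_pair_iff, simR, Set.pair_eq_pair_iff]
  simp only [opSet_eq_iff_classes_eq R T hT]
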